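/- If ρ_AB is a bipartite density operator, π a pure state on system A, and Tr(π Tr_B ρ_AB) ≥ 1 − δ for some δ ≥ 0, then ‖ρ_AB − π ⊗ Tr_A ρ_AB‖_Tr ≤ 2√δ + δ (gentle measurement corollary). -/

import Mathlib

open Matrix
open scoped ComplexOrder Kronecker

/-- Trace norm (with the conventional 1/2 normalization used for trace distance). -/
noncomputable def traceNorm {n : Type*} [Fintype n] [DecidableEq n]
    (A : Matrix n n ℂ) : ℝ :=
  ((((Matrix.posSemidef_conjTranspose_mul_self A).1.eigenvectorUnitary : Matrix n n ℂ) *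
      diagonal (((↑) : ℝ → ℂ) ∘ (√·) ∘ (Matrix.posSemidef_conjTranspose_mul_self A).1.eigenvalues) *
      (star ((Matrix.posSemidef_conjTranspose_mul_self A).1.eigenvectorUnitary : Matrix n n ℂ))).trace).re / 2

/-- A density operator: positive semidefinite with trace one. -/
def IsDensity {n : Type*} [Fintype n] [DecidableEq n] (ρ : Matrix n n ℂ) : Prop :=
  ρ.PosSemidef ∧ ρ.trace = 1

/-- Partial trace over the second factor. -/
noncomputable def ptraceB {A B : Type*} [Fintype A] [Fintype B]
    (ρ : Matrix (A × B) (A × B) ℂ) : Matrix A A ℂ :=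
  fun a a' => ∑ b, ρ (a, b) (a', b)

/-- Partial trace over the first factor. -/
noncomputable def ptraceA {A B : Type*} [Fintype A] [Fintype B]
    (ρ : Matrix (A × B) (A × B) ℂ) : Matrix B B ℂ :=
  fun b b' => ∑ a, ρ (a, b) (a, b')

noncomputable def Matrix.PosSemidef.sqrt {n : Type*} [Fintype n] [DecidableEq n]
    {M : Matrix n n ℂ} (hM : M.PosSemidef) : Matrix n n ℂ :=
  (hM.1.eigenvectorUnitary : Matrix n n ℂ) *
    diagonal (((↑) : ℝ → ℂ) ∘ (√·) ∘ hM.1.eigenvalues) *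
    (star (hM.1.eigenvectorUnitary : Matrix n n ℂ))

open scoped MatrixOrder in
lemma Matrix.PosSemidef.sqrt_eq_CFC {n : Type*} [Fintype n] [DecidableEq n]
    {M : Matrix n n ℂ} (hM : M.PosSemidef) : hM.sqrt = CFC.sqrt M := by
  rw [CFC.sqrt_eq_real_sqrt M hM.nonneg, cfcₙ_eq_cfc, hM.1.cfc_eq]; rfl

open scoped MatrixOrder in
lemma Matrix.PosSemidef.posSemidef_sqrt {n : Type*} [Fintype n] [DecidableEq n]
    {M : Matrix n n ℂ} (hM : M.PosSemidef) : hM.sqrt.PosSemidef := by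
  rw [hM.sqrt_eq_CFC]; exact (CFC.sqrt_nonneg M).posSemidef

open scoped MatrixOrder in
lemma Matrix.PosSemidef.sqrt_mul_self {n : Type*} [Fintype n] [DecidableEq n]
    {M : Matrix n n ℂ} (hM : M.PosSemidef) : hM.sqrt * hM.sqrt = M := by
  rw [hM.sqrt_eq_CFC]; exact CFC.sqrt_mul_sqrt_self M hM.nonneg

open scoped MatrixOrder in
lemma Matrix.PosSemidef.eq_sqrt_of_sq_eq {n : Type*} [Fintype n] [DecidableEq n]
    {A B : Matrix n n ℂ} (hA : A.PosSemidef) (hB : B.PosSemidef) (h : A ^ 2 = B) :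
    A = hB.sqrt := by
  rw [hB.sqrt_eq_CFC, ← h, CFC.sqrt_sq A hA.nonneg]

set_option linter.unusedSectionVars false
namespace GMaux

variable {n : Type*} [Fintype n] [DecidableEq n]

noncomputable def nuc (X : Matrix n n ℂ) : ℝ :=
  ((Matrix.posSemidef_conjTranspose_mul_self X).sqrt.trace).re

lemma sqrt_congr {M N : Matrix n n ℂ} (h : M = N) (hM : M.PosSemidef) (hN : N.PosSemidef) :
    hM.sqrt = hN.sqrt := by subst h; rfl

lemma nuc_congr {X Y : Matrix n n ℂ} (h : Xᴴ * X = Yᴴ * Y) : nuc X = nuc Y := by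
  unfold nuc
  rw [sqrt_congr h (Matrix.posSemidef_conjTranspose_mul_self X)
    (Matrix.posSemidef_conjTranspose_mul_self Y)]

lemma re_star_dot (u : n → ℂ) : (star u ⬝ᵥ u).re = ∑ i, ‖(u i)‖ ^ 2 := by
  simp only [dotProduct, Pi.star_apply, Complex.re_sum]
  refine Finset.sum_congr rfl fun i _ => ?_
  rw [← Complex.normSq_eq_norm_sq]
  simp [RCLike.star_def, Complex.normSq_eq_conj_mul_self, Complex.normSq_apply]

lemma re_star_dot_nonneg (u : n → ℂ) : 0 ≤ (star u ⬝ᵥ u).re := by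
  rw [re_star_dot]; positivity

lemma star_dot_mulVec (C : Matrix n n ℂ) (w : n → ℂ) :
    star (C *ᵥ w) ⬝ᵥ (C *ᵥ w) = star w ⬝ᵥ ((Cᴴ * C) *ᵥ w) := by
  rw [star_mulVec, ← Matrix.mulVec_mulVec, dotProduct_mulVec, vecMul_vecMul,
    ← dotProduct_mulVec, Matrix.mulVec_mulVec]

lemma abs_star_dot_le (u z : n → ℂ) :
    ‖(star u ⬝ᵥ z)‖ ≤ Real.sqrt (star u ⬝ᵥ u).re * Real.sqrt (star z ⬝ᵥ z).re := by
  rw [re_star_dot, re_star_dot]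
  calc ‖(star u ⬝ᵥ z)‖ ≤ ∑ i, ‖(u i)‖ * ‖(z i)‖ := by
        refine (norm_sum_le _ _).trans_eq ?_
        refine Finset.sum_congr rfl fun i _ => ?_
        simp [_root_.map_mul]
    _ ≤ _ := Real.sum_mul_le_sqrt_mul_sqrt _ _ _


def Ctr (C : Matrix n n ℂ) : Prop :=
  ∀ w : n → ℂ, (star (C *ᵥ w) ⬝ᵥ (C *ᵥ w)).re ≤ (star w ⬝ᵥ w).re

lemma ctr_of_proj {C : Matrix n n ℂ} (hherm : (Cᴴ * C)ᴴ = Cᴴ * C)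
    (hidem : (Cᴴ * C) * (Cᴴ * C) = Cᴴ * C) : Ctr C := by
  intro w
  set Q := Cᴴ * C with hQ
  set D := (1 : Matrix n n ℂ) - Q with hD
  have hDD : Dᴴ * D = D := by
    have hDh : Dᴴ = D := by
      rw [hD, conjTranspose_sub, conjTranspose_one, hherm]
    rw [hDh, hD, Matrix.sub_mul, Matrix.mul_sub, Matrix.mul_sub, hidem]
    simp only [Matrix.one_mul, Matrix.mul_one]
    abel
  have h1 : 0 ≤ (star w ⬝ᵥ D *ᵥ w).re := by
    have : star w ⬝ᵥ D *ᵥ w = star (D *ᵥ w) ⬝ᵥ (D *ᵥ w) := by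
      rw [star_dot_mulVec, hDD]
    rw [this]
    exact re_star_dot_nonneg _
  have h2 : star w ⬝ᵥ w = star w ⬝ᵥ Q *ᵥ w + star w ⬝ᵥ D *ᵥ w := by
    rw [hD, Matrix.sub_mulVec, dotProduct_sub, Matrix.one_mulVec]
    ring
  have h3 := star_dot_mulVec C w
  rw [h3, ← hQ]
  have := congrArg Complex.re h2
  rw [Complex.add_re] at this
  linarith

section spectral

variable (X : Matrix n n ℂ)

lemma nuc_eq_sum :
    nuc X = ∑ i, Real.sqrt ((posSemidef_conjTranspose_mul_self X).1.eigenvalues i) := by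
  set hH := posSemidef_conjTranspose_mul_self X
  set V : Matrix n n ℂ := (hH.1.eigenvectorUnitary : Matrix n n ℂ) with hV
  have h1 : star V * V = 1 := Matrix.mem_unitaryGroup_iff'.mp hH.1.eigenvectorUnitary.2
  have hs : hH.sqrt = V * diagonal ((↑) ∘ Real.sqrt ∘ hH.1.eigenvalues) * star V := rfl
  rw [nuc, hs, Matrix.trace_mul_cycle, h1, Matrix.one_mul,
    Matrix.trace_diagonal]
  simp [Complex.re_sum]


lemma diag_entry_star_mul (M N : Matrix n n ℂ) (i : n) :
    (Mᴴ * N) i i = star (fun j => M j i) ⬝ᵥ (fun j => N j i) := by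
  simp [Matrix.mul_apply, dotProduct]

lemma col_mul (C M : Matrix n n ℂ) (i : n) :
    (fun j => (C * M) j i) = C *ᵥ (fun j => M j i) := by
  funext j; simp [Matrix.mul_apply, Matrix.mulVec, dotProduct]

lemma nuc_upper {C : Matrix n n ℂ} (hC : Ctr C) (X : Matrix n n ℂ) :
    ((C * X).trace).re ≤ nuc X := by
  set hH := posSemidef_conjTranspose_mul_self X with hHdef
  set V : Matrix n n ℂ := (hH.1.eigenvectorUnitary : Matrix n n ℂ) with hVdef
  set d : n → ℝ := hH.1.eigenvalues with hddef
  have h1 : Vᴴ * V = 1 := by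
    rw [← Matrix.star_eq_conjTranspose]
    exact Matrix.mem_unitaryGroup_iff'.mp hH.1.eigenvectorUnitary.2
  have h2 : V * Vᴴ = 1 := by
    rw [← Matrix.star_eq_conjTranspose]
    exact Matrix.mem_unitaryGroup_iff.mp hH.1.eigenvectorUnitary.2
  have hspec : Xᴴ * X = V * diagonal (Complex.ofReal ∘ d) * Vᴴ := by
    rw [← Matrix.star_eq_conjTranspose]
    exact hH.1.spectral_theorem
  set Y := X * V with hYdef
  have hYY : Yᴴ * Y = diagonal (Complex.ofReal ∘ d) := by
    rw [hYdef, conjTranspose_mul, Matrix.mul_assoc, ← Matrix.mul_assoc Xᴴ, hspec]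
    rw [Matrix.mul_assoc (V * diagonal (Complex.ofReal ∘ d)) Vᴴ V, h1, Matrix.mul_one,
      ← Matrix.mul_assoc, h1, Matrix.one_mul]
  have hXY : X = Y * Vᴴ := by
    rw [hYdef, Matrix.mul_assoc, h2, Matrix.mul_one]
  have htr : (C * X).trace = (Vᴴ * (C * Y)).trace := by
    conv_lhs => rw [hXY, ← Matrix.mul_assoc]
    rw [Matrix.trace_mul_comm]
  rw [htr, nuc_eq_sum, Matrix.trace]
  rw [Complex.re_sum]
  refine Finset.sum_le_sum fun i _ => ?_
  have hentry : Matrix.diag (Vᴴ * (C * Y)) i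
      = star (fun j => V j i) ⬝ᵥ (C *ᵥ (fun j => Y j i)) := by
    rw [Matrix.diag, diag_entry_star_mul, col_mul]
  rw [hentry]
  have hv : (star (fun j => V j i) ⬝ᵥ (fun j => V j i)).re = 1 := by
    have : (Vᴴ * V) i i = 1 := by rw [h1]; simp
    rw [← diag_entry_star_mul, this, Complex.one_re]
  have hy : (star (fun j => Y j i) ⬝ᵥ (fun j => Y j i)).re = d i := by
    have : (Yᴴ * Y) i i = (d i : ℂ) := by rw [hYY]; simp
    rw [← diag_entry_star_mul, this, Complex.ofReal_re]
  calc (star (fun j => V j i) ⬝ᵥ (C *ᵥ fun j => Y j i)).re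
      ≤ ‖(star (fun j => V j i) ⬝ᵥ (C *ᵥ fun j => Y j i))‖ := Complex.re_le_norm _
    _ ≤ Real.sqrt (star (fun j => V j i) ⬝ᵥ (fun j => V j i)).re *
        Real.sqrt (star (C *ᵥ fun j => Y j i) ⬝ᵥ (C *ᵥ fun j => Y j i)).re :=
        abs_star_dot_le _ _
    _ ≤ Real.sqrt (d i) := by
        rw [hv, Real.sqrt_one, one_mul]
        exact Real.sqrt_le_sqrt ((hC _).trans (le_of_eq hy))


lemma nuc_attained (X : Matrix n n ℂ) :
    ∃ C : Matrix n n ℂ, Ctr C ∧ (C * X).trace = (nuc X : ℂ) := by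
  obtain ⟨V, dR, hV1, hV2, hspec, hnuc, hdnn⟩ :
      ∃ (V : Matrix n n ℂ) (dR : n → ℝ), Vᴴ * V = 1 ∧ V * Vᴴ = 1 ∧
        Xᴴ * X = V * (diagonal (Complex.ofReal ∘ dR) * Vᴴ) ∧
        nuc X = ∑ i, Real.sqrt (dR i) ∧ ∀ i, 0 ≤ dR i := by
    refine ⟨((posSemidef_conjTranspose_mul_self X).1.eigenvectorUnitary : Matrix n n ℂ),
      (posSemidef_conjTranspose_mul_self X).1.eigenvalues, ?_, ?_, ?_, nuc_eq_sum X,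
      (posSemidef_conjTranspose_mul_self X).eigenvalues_nonneg⟩
    · have h := Matrix.mem_unitaryGroup_iff'.mp
        (posSemidef_conjTranspose_mul_self X).1.eigenvectorUnitary.2
      rwa [Matrix.star_eq_conjTranspose] at h
    · have h := Matrix.mem_unitaryGroup_iff.mp
        (posSemidef_conjTranspose_mul_self X).1.eigenvectorUnitary.2
      rwa [Matrix.star_eq_conjTranspose] at h
    · have h := (posSemidef_conjTranspose_mul_self X).1.spectral_theorem
      rw [Unitary.conjStarAlgAut_apply, Matrix.star_eq_conjTranspose] at h
      exact h.trans (Matrix.mul_assoc _ _ _)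
  have r1 : ∀ M : Matrix n n ℂ, Vᴴ * (V * M) = M := fun M => by
    rw [← Matrix.mul_assoc, hV1, Matrix.one_mul]
  have r2 : ∀ M : Matrix n n ℂ, Xᴴ * (X * M)
      = V * (diagonal (Complex.ofReal ∘ dR) * (Vᴴ * M)) := fun M => by
    rw [← Matrix.mul_assoc, hspec]
    simp only [Matrix.mul_assoc]
  have rd : ∀ (a b : n → ℂ) (M : Matrix n n ℂ),
      diagonal a * (diagonal b * M) = diagonal (fun i => a i * b i) * M := fun a b M => by
    rw [← Matrix.mul_assoc, diagonal_mul_diagonal]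
  set e : n → ℂ := fun i => ((Real.sqrt (dR i))⁻¹ : ℝ) with hedef
  have hestar : star e = e := by
    funext i; simp [hedef, RCLike.star_def, Complex.conj_ofReal]
  have hfstar : star (fun i => e i * e i) = fun i => e i * e i := by
    funext i
    simp only [Pi.star_apply, star_mul']
    rw [show star (e i) = e i from congrFun hestar i]
  have hCH : (V * (diagonal e * (Vᴴ * Xᴴ)))ᴴ = X * (V * (diagonal e * Vᴴ)) := by
    simp only [conjTranspose_mul, conjTranspose_conjTranspose, diagonal_conjTranspose,
      hestar, Matrix.mul_assoc]
  have hQ : (V * (diagonal e * (Vᴴ * Xᴴ)))ᴴ * (V * (diagonal e * (Vᴴ * Xᴴ)))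
      = X * (V * (diagonal (fun i => e i * e i) * (Vᴴ * Xᴴ))) := by
    rw [hCH]
    simp only [Matrix.mul_assoc, r1, rd]
  have hscal : ∀ i, (e i * e i) * ((Complex.ofReal ∘ dR) i * (e i * e i)) = e i * e i := by
    intro i
    simp only [hedef, Function.comp_apply]
    rcases eq_or_ne (dR i) 0 with hd | hd
    · simp [hd]
    · have hsq : (Real.sqrt (dR i)) * (Real.sqrt (dR i)) = dR i := Real.mul_self_sqrt (hdnn i)
      have hs : Real.sqrt (dR i) ≠ 0 := Real.sqrt_ne_zero'.mpr (lt_of_le_of_ne (hdnn i) (Ne.symm hd))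
      rw [← hsq]
      push_cast
      field_simp
      rw [Real.sqrt_sq (Real.sqrt_nonneg _)]
  refine ⟨V * (diagonal e * (Vᴴ * Xᴴ)), ctr_of_proj ?_ ?_, ?_⟩
  · rw [hQ]
    simp only [conjTranspose_mul, conjTranspose_conjTranspose, diagonal_conjTranspose,
      hfstar, Matrix.mul_assoc]
  · rw [hQ]
    simp only [Matrix.mul_assoc, r2, r1, rd]
    have : (fun i => (e i * e i) * ((Complex.ofReal ∘ dR) i * (e i * e i)))
        = fun i => e i * e i := funext hscal
    rw [this]
  · have hCX : (V * (diagonal e * (Vᴴ * Xᴴ))) * X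
        = V * (diagonal (fun i => e i * (Complex.ofReal ∘ dR) i) * Vᴴ) := by
      simp only [Matrix.mul_assoc]
      rw [show Xᴴ * X = V * (diagonal (Complex.ofReal ∘ dR) * Vᴴ) from hspec]
      simp only [r1, rd]
    rw [hCX, ← Matrix.mul_assoc, Matrix.trace_mul_cycle, hV1,
      Matrix.one_mul, Matrix.trace_diagonal, hnuc]
    push_cast
    refine Finset.sum_congr rfl fun i _ => ?_
    simp only [hedef, Function.comp_apply]
    rcases eq_or_ne (dR i) 0 with hd | hd
    · simp [hd]
    · have hsq : (Real.sqrt (dR i)) * (Real.sqrt (dR i)) = dR i := Real.mul_self_sqrt (hdnn i)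
      have hs : Real.sqrt (dR i) ≠ 0 := Real.sqrt_ne_zero'.mpr (lt_of_le_of_ne (hdnn i) (Ne.symm hd))
      rw [← hsq]
      push_cast
      field_simp
      rw [Real.sqrt_sq (Real.sqrt_nonneg _)]

end spectral

lemma nuc_add_le (X Y : Matrix n n ℂ) : nuc (X + Y) ≤ nuc X + nuc Y := by
  obtain ⟨C, hC, htr⟩ := nuc_attained (X + Y)
  have h0 : nuc (X + Y) = ((C * (X + Y)).trace).re := by rw [htr]; simp
  rw [h0, Matrix.mul_add, Matrix.trace_add, Complex.add_re]
  exact add_le_add (nuc_upper hC X) (nuc_upper hC Y)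

lemma frob_sq_eq (M : Matrix n n ℂ) :
    ((Mᴴ * M).trace).re = ∑ p : n × n, ‖(M p.1 p.2)‖ ^ 2 := by
  have hd : ∀ j, ((Mᴴ * M).diag j).re = ∑ i, ‖(M i j)‖ ^ 2 := fun j => by
    rw [Matrix.diag, diag_entry_star_mul, re_star_dot]
  rw [Matrix.trace, Complex.re_sum]
  simp_rw [hd]
  rw [Fintype.sum_prod_type]
  exact Finset.sum_comm

lemma frob_sq_eq' (Z : Matrix n n ℂ) :
    ((Zᴴ * Z).trace).re = ∑ p : n × n, ‖(Z p.2 p.1)‖ ^ 2 := by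
  have hd : ∀ j, ((Zᴴ * Z).diag j).re = ∑ i, ‖(Z i j)‖ ^ 2 := fun j => by
    rw [Matrix.diag, diag_entry_star_mul, re_star_dot]
  rw [Matrix.trace, Complex.re_sum]
  simp_rw [hd]
  rw [Fintype.sum_prod_type]

lemma frob_mul_ctr {C : Matrix n n ℂ} (hC : Ctr C) (X : Matrix n n ℂ) :
    (((C * X)ᴴ * (C * X)).trace).re ≤ ((Xᴴ * X).trace).re := by
  rw [Matrix.trace, Complex.re_sum, Matrix.trace, Complex.re_sum]
  refine Finset.sum_le_sum fun j _ => ?_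
  rw [Matrix.diag, diag_entry_star_mul, Matrix.diag, diag_entry_star_mul, col_mul]
  exact hC _

lemma nuc_mul_le (X Z : Matrix n n ℂ) :
    nuc (X * Z) ≤ Real.sqrt ((Xᴴ * X).trace).re * Real.sqrt ((Zᴴ * Z).trace).re := by
  obtain ⟨C, hC, htr⟩ := nuc_attained (X * Z)
  have h0 : nuc (X * Z) = ((C * (X * Z)).trace).re := by rw [htr]; simp
  rw [h0, ← Matrix.mul_assoc]
  have h1 : (C * X * Z).trace = ∑ p : n × n, (C * X) p.1 p.2 * Z p.2 p.1 := by
    rw [Matrix.trace, Fintype.sum_prod_type]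
    exact Finset.sum_congr rfl fun i _ => by simp [Matrix.mul_apply, Matrix.diag]
  calc ((C * X * Z).trace).re
      ≤ ‖((C * X * Z).trace)‖ := Complex.re_le_norm _
    _ ≤ ∑ p : n × n, ‖((C * X) p.1 p.2)‖ * ‖(Z p.2 p.1)‖ := by
        rw [h1]
        refine (norm_sum_le _ _).trans_eq ?_
        exact Finset.sum_congr rfl fun p _ => by simp [_root_.map_mul]
    _ ≤ Real.sqrt (∑ p : n × n, ‖((C * X) p.1 p.2)‖ ^ 2) *
        Real.sqrt (∑ p : n × n, ‖(Z p.2 p.1)‖ ^ 2) :=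
        Real.sum_mul_le_sqrt_mul_sqrt _ _ _
    _ ≤ _ := by
        rw [← frob_sq_eq, ← frob_sq_eq']
        refine mul_le_mul_of_nonneg_right ?_ (Real.sqrt_nonneg _)
        exact Real.sqrt_le_sqrt (frob_mul_ctr hC X)

lemma nuc_psd {K : Matrix n n ℂ} (hK : K.PosSemidef) : nuc K = (K.trace).re := by
  have h2 : K ^ 2 = Kᴴ * K := by rw [pow_two, hK.1.eq]
  have h3 := hK.eq_sqrt_of_sq_eq (posSemidef_conjTranspose_mul_self K) h2
  rw [nuc, ← h3]

lemma nuc_neg (K : Matrix n n ℂ) : nuc (-K) = nuc K :=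
  nuc_congr (by simp)

lemma trace_mul_psd_nonneg {M N : Matrix n n ℂ} (hA : M.PosSemidef) (hB : N.PosSemidef) :
    0 ≤ ((M * N).trace).re := by
  have hS := hB.posSemidef_sqrt
  have hmul : M * N = M * hB.sqrt * hB.sqrt := by rw [Matrix.mul_assoc, hB.sqrt_mul_self]
  rw [hmul, Matrix.trace_mul_cycle, Matrix.trace, Complex.re_sum]
  refine Finset.sum_nonneg fun j _ => ?_
  have hrw : hB.sqrt * M * hB.sqrt = hB.sqrtᴴ * (M * hB.sqrt) := by
    rw [hS.1, Matrix.mul_assoc]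
  have hdd : (hB.sqrt * M * hB.sqrt).diag j
      = star (fun i => hB.sqrt i j) ⬝ᵥ (M *ᵥ (fun i => hB.sqrt i j)) := by
    rw [Matrix.diag, hrw, diag_entry_star_mul, col_mul]
  rw [hdd]
  exact hA.re_dotProduct_nonneg _



section bipartite

variable {A B : Type*} [Fintype A] [DecidableEq A] [Fintype B] [DecidableEq B]

lemma ptraceA_herm {M : Matrix (A × B) (A × B) ℂ} (hM : M.IsHermitian) :
    (ptraceA M).IsHermitian := by
  show (ptraceA M)ᴴ = ptraceA M
  ext b b'
  rw [conjTranspose_apply]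
  show star (ptraceA M b' b) = ptraceA M b b'
  simp only [ptraceA]
  rw [star_sum]
  refine Finset.sum_congr rfl fun a _ => ?_
  calc star (M (a, b') (a, b)) = Mᴴ (a, b) (a, b') := by rw [conjTranspose_apply]
    _ = M (a, b) (a, b') := by rw [hM.eq]

lemma ptraceA_sub (M N : Matrix (A × B) (A × B) ℂ) :
    ptraceA (M - N) = ptraceA M - ptraceA N := by
  ext b b'
  simp [ptraceA, Finset.sum_sub_distrib]

lemma ptraceA_add (M N : Matrix (A × B) (A × B) ℂ) :
    ptraceA (M + N) = ptraceA M + ptraceA N := by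
  ext b b'
  simp [ptraceA, Finset.sum_add_distrib]

lemma trace_ptraceA (M : Matrix (A × B) (A × B) ℂ) :
    (ptraceA M).trace = M.trace := by
  rw [Matrix.trace, Matrix.trace]
  simp only [Matrix.diag, ptraceA]
  rw [Fintype.sum_prod_type]
  exact Finset.sum_comm

lemma ptraceA_posSemidef {M : Matrix (A × B) (A × B) ℂ} (hM : M.PosSemidef) :
    (ptraceA M).PosSemidef := by
  refine .of_dotProduct_mulVec_nonneg (ptraceA_herm hM.1) fun x => ?_
  have hx : star x ⬝ᵥ (ptraceA M) *ᵥ x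
      = ∑ a : A, star (fun p : A × B => if p.1 = a then x p.2 else 0) ⬝ᵥ
          (M *ᵥ (fun p : A × B => if p.1 = a then x p.2 else 0)) := by
    simp only [dotProduct, Matrix.mulVec, ptraceA, Pi.star_apply, Fintype.sum_prod_type,
      RCLike.star_def, apply_ite (starRingEnd ℂ), map_zero, ite_mul, zero_mul, mul_ite, mul_zero,
      Finset.sum_ite_irrel, Finset.sum_const_zero,
      Finset.sum_ite_eq, Finset.sum_ite_eq', Finset.mem_univ, if_true]
    simp only [Finset.mul_sum, Finset.sum_mul]
    calc ∑ b : B, ∑ b' : B, ∑ a : A, (starRingEnd ℂ) (x b) * (M (a, b) (a, b') * x b')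
        = ∑ b : B, ∑ a : A, ∑ b' : B, (starRingEnd ℂ) (x b) * (M (a, b) (a, b') * x b') :=
          Finset.sum_congr rfl fun b _ => Finset.sum_comm
      _ = ∑ a : A, ∑ b : B, ∑ b' : B, (starRingEnd ℂ) (x b) * (M (a, b) (a, b') * x b') :=
          Finset.sum_comm

  rw [hx]
  exact Finset.sum_nonneg fun a _ => hM.dotProduct_mulVec_nonneg _


noncomputable def piM (ψ : A → ℂ) : Matrix A A ℂ := Matrix.vecMulVec ψ (star ψ)

noncomputable def sigt (ψ : A → ℂ) (ρ : Matrix (A × B) (A × B) ℂ) : Matrix B B ℂ :=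
  fun b b' => ∑ a, ∑ a', star (ψ a) * ρ (a, b) (a', b') * ψ a'

variable (ψ : A → ℂ)

lemma pi_herm : (piM ψ)ᴴ = piM ψ := by
  ext a a'
  simp only [conjTranspose_apply, piM, vecMulVec_apply, Pi.star_apply, star_mul', star_star]
  ring

lemma star_pi (i j : A) : star (piM ψ j i) = piM ψ i j := by
  rw [← conjTranspose_apply, pi_herm]

lemma sum_star_mul (hψ : star ψ ⬝ᵥ ψ = 1) : ∑ c, star (ψ c) * ψ c = 1 := by
  simpa [dotProduct] using hψ

lemma pi_sq (hψ : star ψ ⬝ᵥ ψ = 1) : piM ψ * piM ψ = piM ψ := by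
  ext a a'
  simp only [piM, Matrix.mul_apply, vecMulVec_apply, Pi.star_apply]
  have h2 : ∀ c, (ψ a * star (ψ c)) * (ψ c * star (ψ a'))
      = (star (ψ c) * ψ c) * (ψ a * star (ψ a')) := fun c => by ring
  simp_rw [h2]
  rw [← Finset.sum_mul, sum_star_mul ψ hψ, one_mul]

lemma pi_trace (hψ : star ψ ⬝ᵥ ψ = 1) : (piM ψ).trace = 1 := by
  rw [Matrix.trace]
  simp only [Matrix.diag, piM, vecMulVec_apply, Pi.star_apply]
  rw [← sum_star_mul ψ hψ]
  exact Finset.sum_congr rfl fun a _ => by ring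

lemma kron_sub (X : Matrix A A ℂ) (M N : Matrix B B ℂ) :
    X ⊗ₖ (M - N) = X ⊗ₖ M - X ⊗ₖ N := by
  ext p q
  simp only [kroneckerMap_apply, Matrix.sub_apply, mul_sub]

lemma kron_psd (hψ : star ψ ⬝ᵥ ψ = 1) {N : Matrix B B ℂ} (hN : N.PosSemidef) :
    (piM ψ ⊗ₖ N).PosSemidef := by
  have hs := hN.posSemidef_sqrt
  have hS : ∀ i j, star (hN.sqrt j i) = hN.sqrt i j := fun i j => by
    rw [← conjTranspose_apply, hs.1.eq]
  have h1 : (piM ψ ⊗ₖ hN.sqrt)ᴴ = piM ψ ⊗ₖ hN.sqrt := by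
    ext p q
    simp only [conjTranspose_apply, kroneckerMap_apply, star_mul', hS, star_pi]
  have h2 : (piM ψ ⊗ₖ hN.sqrt) * (piM ψ ⊗ₖ hN.sqrt) = piM ψ ⊗ₖ N := by
    rw [← Matrix.mul_kronecker_mul, pi_sq ψ hψ, hN.sqrt_mul_self]
  have h3 := posSemidef_conjTranspose_mul_self (piM ψ ⊗ₖ hN.sqrt)
  rw [h1, h2] at h3
  exact h3

lemma ptraceA_kron (hψ : star ψ ⬝ᵥ ψ = 1) (N : Matrix B B ℂ) :
    ptraceA (piM ψ ⊗ₖ N) = N := by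
  ext b b'
  show ∑ a, (piM ψ ⊗ₖ N) (a, b) (a, b') = N b b'
  simp only [kroneckerMap_apply, piM, vecMulVec_apply, Pi.star_apply]
  have h2 : ∀ a, (ψ a * star (ψ a)) * N b b' = (star (ψ a) * ψ a) * N b b' := fun a => by ring
  simp_rw [h2]
  rw [← Finset.sum_mul, sum_star_mul ψ hψ, one_mul]

lemma ptraceA_P_mul (ρ : Matrix (A × B) (A × B) ℂ) :
    ptraceA ((piM ψ ⊗ₖ (1 : Matrix B B ℂ)) * ρ) = sigt ψ ρ := by
  ext b b'
  show ∑ a, ((piM ψ ⊗ₖ (1 : Matrix B B ℂ)) * ρ) (a, b) (a, b') = sigt ψ ρ b b'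
  simp only [Matrix.mul_apply, kroneckerMap_apply, Fintype.sum_prod_type, piM,
    vecMulVec_apply, Pi.star_apply, Matrix.one_apply, mul_ite, mul_zero, mul_one,
    ite_mul, zero_mul, Finset.sum_ite_irrel, Finset.sum_const_zero,
    Finset.sum_ite_eq, Finset.sum_ite_eq', Finset.mem_univ, if_true, sigt]
  rw [Finset.sum_comm]
  exact Finset.sum_congr rfl fun c _ => Finset.sum_congr rfl fun a _ => by ring

lemma ptraceA_mul_P (ρ : Matrix (A × B) (A × B) ℂ) :
    ptraceA (ρ * (piM ψ ⊗ₖ (1 : Matrix B B ℂ))) = sigt ψ ρ := by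
  ext b b'
  show ∑ a, (ρ * (piM ψ ⊗ₖ (1 : Matrix B B ℂ))) (a, b) (a, b') = sigt ψ ρ b b'
  simp only [Matrix.mul_apply, kroneckerMap_apply, Fintype.sum_prod_type, piM,
    vecMulVec_apply, Pi.star_apply, Matrix.one_apply, mul_ite, mul_zero, mul_one,
    ite_mul, zero_mul, Finset.sum_ite_irrel, Finset.sum_const_zero,
    Finset.sum_ite_eq, Finset.sum_ite_eq', Finset.mem_univ, if_true, sigt]
  exact Finset.sum_congr rfl fun a _ => Finset.sum_congr rfl fun c _ => by ring

lemma P_rho_P (ρ : Matrix (A × B) (A × B) ℂ) :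
    (piM ψ ⊗ₖ (1 : Matrix B B ℂ)) * ρ * (piM ψ ⊗ₖ (1 : Matrix B B ℂ)) = piM ψ ⊗ₖ sigt ψ ρ := by
  ext p q
  obtain ⟨a, b⟩ := p
  obtain ⟨a', b'⟩ := q
  simp only [Matrix.mul_apply, kroneckerMap_apply, Fintype.sum_prod_type, piM,
    vecMulVec_apply, Pi.star_apply, Matrix.one_apply, mul_ite, mul_zero, mul_one,
    ite_mul, zero_mul, Finset.sum_ite_irrel, Finset.sum_const_zero,
    Finset.sum_ite_eq, Finset.sum_ite_eq', Finset.mem_univ, if_true, sigt]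
  simp only [Finset.mul_sum, Finset.sum_mul]
  rw [Finset.sum_comm]
  exact Finset.sum_congr rfl fun c _ => Finset.sum_congr rfl fun c' _ => by ring

lemma trace_P_mul (ρ : Matrix (A × B) (A × B) ℂ) :
    ((piM ψ ⊗ₖ (1 : Matrix B B ℂ)) * ρ).trace = (piM ψ * ptraceB ρ).trace := by
  rw [← trace_ptraceA ((piM ψ ⊗ₖ (1 : Matrix B B ℂ)) * ρ), ptraceA_P_mul]
  rw [Matrix.trace, Matrix.trace]
  simp only [Matrix.diag, sigt, Matrix.mul_apply, ptraceB, piM, vecMulVec_apply,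
    Pi.star_apply, Finset.mul_sum, Finset.sum_mul]
  calc ∑ b, ∑ a, ∑ a', star (ψ a) * ρ (a, b) (a', b) * ψ a'
      = ∑ a, ∑ a', ∑ b, star (ψ a) * ρ (a, b) (a', b) * ψ a' := by
        rw [Finset.sum_comm]
        exact Finset.sum_congr rfl fun a _ => Finset.sum_comm
    _ = ∑ a', ∑ a, ∑ b, star (ψ a) * ρ (a, b) (a', b) * ψ a' := Finset.sum_comm
    _ = ∑ x : A, ∑ x1 : A, ∑ i : B, ψ x * star (ψ x1) * ρ (x1, i) (x, i) :=
        Finset.sum_congr rfl fun a' _ => Finset.sum_congr rfl fun a _ =>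
          Finset.sum_congr rfl fun b _ => by ring

end bipartite

end GMaux

open GMaux in
/-- Gentle measurement corollary: if `Tr(π Tr_B ρ_AB) ≥ 1 − δ` for a pure state
`π = |ψ⟩⟨ψ|` on system `A`, then `‖ρ_AB − π ⊗ Tr_A ρ_AB‖_Tr ≤ 2√δ + δ`. -/
theorem gentle_measurement {A B : Type*} [Fintype A] [DecidableEq A]
    [Fintype B] [DecidableEq B]
    (ρAB : Matrix (A × B) (A × B) ℂ) (hρ : IsDensity ρAB)
    (ψ : A → ℂ) (hψ : star ψ ⬝ᵥ ψ = 1) (δ : ℝ) (hδ : 0 ≤ δ)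
    (h : 1 - δ ≤ ((Matrix.vecMulVec ψ (star ψ) * ptraceB ρAB).trace).re) :
    traceNorm (ρAB - Matrix.vecMulVec ψ (star ψ) ⊗ₖ ptraceA ρAB)
      ≤ 2 * Real.sqrt δ + δ := by
  classical
  obtain ⟨hpsd, htr1⟩ := hρ
  replace h : 1 - δ ≤ ((piM ψ * ptraceB ρAB).trace).re := h
  set R := hpsd.sqrt with hRdef
  have hRR : R * R = ρAB := hpsd.sqrt_mul_self
  have hRH : Rᴴ = R := hpsd.posSemidef_sqrt.1
  set P : Matrix (A × B) (A × B) ℂ := piM ψ ⊗ₖ (1 : Matrix B B ℂ) with hPdef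
  have h1H : ∀ i j : B, star ((1 : Matrix B B ℂ) j i) = (1 : Matrix B B ℂ) i j := fun i j => by
    rw [← conjTranspose_apply, conjTranspose_one]
  have hPH : Pᴴ = P := by
    rw [hPdef]
    ext p q
    simp only [conjTranspose_apply, kroneckerMap_apply, star_mul', h1H, star_pi]
  have hPP : P * P = P := by
    rw [hPdef, ← Matrix.mul_kronecker_mul, pi_sq ψ hψ, Matrix.one_mul]
  set Q : Matrix (A × B) (A × B) ℂ := 1 - P with hQdef
  have hQH : Qᴴ = Q := by
    rw [hQdef, conjTranspose_sub, conjTranspose_one, hPH]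
  have hQQ : Q * Q = Q := by
    rw [hQdef, Matrix.sub_mul, Matrix.mul_sub, Matrix.mul_sub, hPP]
    simp only [Matrix.one_mul, Matrix.mul_one]
    abel
  have hQpsd : Q.PosSemidef := by
    have h2 := posSemidef_conjTranspose_mul_self Q
    rwa [hQH, hQQ] at h2
  have hPpsd : P.PosSemidef := by
    have h2 := posSemidef_conjTranspose_mul_self P
    rwa [hPH, hPP] at h2
  set ρB := ptraceA ρAB with hρBdef
  set σ := sigt ψ ρAB with hσdef
  have hPρP : P * ρAB * P = piM ψ ⊗ₖ σ := P_rho_P ψ ρAB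
  have htrP : ((P * ρAB).trace) = (piM ψ * ptraceB ρAB).trace := trace_P_mul ψ ρAB
  have hre_P_lb : 1 - δ ≤ ((P * ρAB).trace).re := by rw [htrP]; exact h
  have htrQρ : ((Q * ρAB).trace).re = 1 - ((P * ρAB).trace).re := by
    rw [hQdef, Matrix.sub_mul, Matrix.one_mul, Matrix.trace_sub, Complex.sub_re, htr1,
      Complex.one_re]
  have hQρ_nonneg : 0 ≤ ((Q * ρAB).trace).re := trace_mul_psd_nonneg hQpsd hpsd
  have hre_Qρ : ((Q * ρAB).trace).re ≤ δ := by rw [htrQρ]; linarith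
  have hre_Pρ_le1 : ((P * ρAB).trace).re ≤ 1 := by
    have := hQρ_nonneg
    rw [htrQρ] at this
    linarith
  -- ρB - σ is PSD
  have hQρQ_psd : (Q * ρAB * Q).PosSemidef := by
    have h2 := hpsd.mul_mul_conjTranspose_same Q
    rwa [hQH] at h2
  have hexp : Q * ρAB * Q = ρAB - P * ρAB - (ρAB * P - P * ρAB * P) := by
    rw [hQdef]; noncomm_ring
  have hptrQρQ : ptraceA (Q * ρAB * Q) = ρB - σ := by
    rw [hexp, ptraceA_sub, ptraceA_sub, ptraceA_sub, ptraceA_P_mul, ptraceA_mul_P, hPρP,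
      ptraceA_kron ψ hψ, ← hσdef, ← hρBdef]
    abel
  have hM_psd : (ρB - σ).PosSemidef := by
    have h2 := ptraceA_posSemidef hQρQ_psd
    rwa [hptrQρQ] at h2
  have hK_psd : ((piM ψ) ⊗ₖ (ρB - σ)).PosSemidef := kron_psd ψ hψ hM_psd
  have htrσ : σ.trace = (P * ρAB).trace := by
    rw [hσdef, ← ptraceA_P_mul ψ ρAB, trace_ptraceA, ← hPdef]
  have htrρB : ρB.trace = 1 := by rw [hρBdef, trace_ptraceA, htr1]
  -- bound 3
  have hb3 : nuc (-(piM ψ ⊗ₖ (ρB - σ))) ≤ δ := by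
    rw [nuc_neg, nuc_psd hK_psd, Matrix.trace_kronecker, pi_trace ψ hψ, one_mul,
      Matrix.trace_sub, htrσ, htrρB, Complex.sub_re, Complex.one_re]
    linarith
  -- frobenius traces
  have hfrobR : ((Rᴴ * R).trace).re = 1 := by rw [hRH, hRR, htr1, Complex.one_re]
  have htrQR : (((Q * R)ᴴ * (Q * R)).trace) = (Q * ρAB).trace := by
    rw [conjTranspose_mul, hQH, hRH, Matrix.mul_assoc R Q (Q * R), ← Matrix.mul_assoc Q Q R,
      hQQ, Matrix.trace_mul_comm, Matrix.mul_assoc, hRR]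
  have htrPR : (((P * R)ᴴ * (P * R)).trace) = (P * ρAB).trace := by
    rw [conjTranspose_mul, hPH, hRH, Matrix.mul_assoc R P (P * R), ← Matrix.mul_assoc P P R,
      hPP, Matrix.trace_mul_comm, Matrix.mul_assoc, hRR]
  have htrRQ : (((R * Q)ᴴ * (R * Q)).trace) = (Q * ρAB).trace := by
    rw [conjTranspose_mul, hQH, hRH, Matrix.mul_assoc Q R (R * Q), ← Matrix.mul_assoc R R Q,
      hRR, ← Matrix.mul_assoc, Matrix.trace_mul_cycle, hQQ]
  -- bound 1
  have hb1 : nuc (Q * ρAB) ≤ Real.sqrt δ := by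
    have h0 : Q * ρAB = (Q * R) * R := by rw [Matrix.mul_assoc, hRR]
    rw [h0]
    refine (nuc_mul_le _ _).trans ?_
    rw [hfrobR, Real.sqrt_one, mul_one,
      show (((Q * R)ᴴ * (Q * R)).trace).re = ((Q * ρAB).trace).re from congrArg Complex.re htrQR]
    exact Real.sqrt_le_sqrt hre_Qρ
  -- bound 2
  have hb2 : nuc (P * ρAB * Q) ≤ Real.sqrt δ := by
    have h0 : P * ρAB * Q = (P * R) * (R * Q) := by
      rw [Matrix.mul_assoc P R (R * Q), ← Matrix.mul_assoc R R Q, hRR, ← Matrix.mul_assoc]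
    rw [h0]
    refine (nuc_mul_le _ _).trans ?_
    rw [show (((P * R)ᴴ * (P * R)).trace).re = ((P * ρAB).trace).re from congrArg Complex.re htrPR,
      show (((R * Q)ᴴ * (R * Q)).trace).re = ((Q * ρAB).trace).re from congrArg Complex.re htrRQ]
    calc Real.sqrt ((P * ρAB).trace).re * Real.sqrt ((Q * ρAB).trace).re
        ≤ Real.sqrt 1 * Real.sqrt δ := by
          refine mul_le_mul (Real.sqrt_le_sqrt hre_Pρ_le1) (Real.sqrt_le_sqrt hre_Qρ)
            (Real.sqrt_nonneg _) (Real.sqrt_nonneg _)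
      _ = Real.sqrt δ := by rw [Real.sqrt_one, one_mul]
  -- decomposition
  have hdecomp : ρAB - piM ψ ⊗ₖ ρB = Q * ρAB + (P * ρAB * Q + -(piM ψ ⊗ₖ (ρB - σ))) := by
    rw [kron_sub, ← hPρP, hQdef]
    noncomm_ring
  have htotal : nuc (ρAB - piM ψ ⊗ₖ ρB) ≤ 2 * Real.sqrt δ + δ := by
    rw [hdecomp]
    refine (nuc_add_le _ _).trans ?_
    have h2 := nuc_add_le (P * ρAB * Q) (-(piM ψ ⊗ₖ (ρB - σ)))
    linarith
  show nuc (ρAB - piM ψ ⊗ₖ ρB) / 2 ≤ 2 * Real.sqrt δ + δ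
  have hs := Real.sqrt_nonneg δ
  linarith
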